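/- arXiv:1502.04404 — 2 statements merged into one kernel-verified Lean document; each statement's English description precedes it below -/
import Mathlib

section
/- For every integer k ≥ 0 and every real x > 0, the k-th derivative of the function x ↦ e^{−x^{−m}} satisfies |D^k(e^{−x^{−m}})(x)| ≤ (8m)^k · k^{(1+1/m)·k}, with the convention 0⁰ = 1. -/
open Finset in
lemma aux_norm_pow_sub_pow (z w : ℂ) (M : ℝ) (n : ℕ) (hM : 0 ≤ M)
    (hz : ‖z‖ ≤ M) (hw : ‖w‖ ≤ M) : ‖z ^ n - w ^ n‖ ≤ n * M ^ (n - 1) * ‖z - w‖ := by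
  rw [← geom_sum₂_mul z w n, norm_mul]
  refine mul_le_mul_of_nonneg_right ?_ (norm_nonneg _)
  calc ‖∑ i ∈ range n, z ^ i * w ^ (n - 1 - i)‖
      ≤ ∑ i ∈ range n, ‖z ^ i * w ^ (n - 1 - i)‖ := norm_sum_le _ _
    _ ≤ ∑ i ∈ range n, M ^ (n - 1) := by
        refine Finset.sum_le_sum fun i hi => ?_
        rw [norm_mul, norm_pow, norm_pow]
        calc ‖z‖ ^ i * ‖w‖ ^ (n - 1 - i) ≤ M ^ i * M ^ (n - 1 - i) := by
              exact mul_le_mul (pow_le_pow_left₀ (norm_nonneg _) hz i)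
                (pow_le_pow_left₀ (norm_nonneg _) hw _) (by positivity) (by positivity)
          _ = M ^ (n - 1) := by
              rw [← pow_add]
              congr 1
              have := Finset.mem_range.1 hi
              omega
    _ = n * M ^ (n - 1) := by rw [Finset.sum_const, card_range, nsmul_eq_mul]

lemma aux_pow_mul_exp_le (k : ℕ) (b t : ℝ) (hb : 0 < b) (ht : 0 ≤ t) :
    t ^ k * Real.exp (-(b * t)) ≤ ((k : ℝ) / (b * Real.exp 1)) ^ k := by
  rcases Nat.eq_zero_or_pos k with rfl | hk
  · have : Real.exp (-(b * t)) ≤ 1 := Real.exp_le_one_iff.2 (by nlinarith [mul_nonneg hb.le ht])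
    simpa using this
  have hkR : (0 : ℝ) < k := by exact_mod_cast hk
  have h1 : b * t / k ≤ Real.exp (b * t / k - 1) := by
    have := Real.add_one_le_exp (b * t / k - 1); linarith
  have h2 : (b * t / k) ^ k ≤ Real.exp (b * t - k) := by
    calc (b * t / k) ^ k ≤ Real.exp (b * t / k - 1) ^ k :=
          pow_le_pow_left₀ (by positivity) h1 k
      _ = Real.exp (b * t - k) := by
          rw [← Real.exp_nat_mul]
          congr 1
          field_simp
  have key : t ^ k = (b * t / k) ^ k * ((k : ℝ) / b) ^ k := by
    rw [← mul_pow]; congr 1; field_simp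
  calc t ^ k * Real.exp (-(b * t))
      ≤ Real.exp (b * t - k) * ((k : ℝ) / b) ^ k * Real.exp (-(b * t)) := by
        rw [key]
        exact mul_le_mul_of_nonneg_right (mul_le_mul_of_nonneg_right h2 (by positivity))
          (Real.exp_pos _).le
    _ = ((k : ℝ) / b) ^ k * Real.exp (-(k : ℝ)) := by
        rw [mul_comm (Real.exp (b * t - ↑k)), mul_assoc, ← Real.exp_add]
        ring_nf
    _ = ((k : ℝ) / (b * Real.exp 1)) ^ k := by
        rw [show (-(k:ℝ)) = (k : ℕ) * (-1) by push_cast; ring, Real.exp_nat_mul,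
          ← mul_pow]
        congr 1
        rw [Real.exp_neg]
        field_simp
lemma aux_F_diff (m : ℕ) (hm : 1 ≤ m) {z : ℂ} (hz : z ≠ 0) :
    DifferentiableAt ℂ (fun z : ℂ => Complex.exp (-(z ^ m)⁻¹)) z := by
  have h1 : DifferentiableAt ℂ (fun z : ℂ => -(z ^ m)⁻¹) z :=
    (((differentiableAt_pow m : DifferentiableAt ℂ (fun z : ℂ => z ^ m) z)).inv (pow_ne_zero m hz)).neg
  exact h1.cexp

lemma aux_F_analytic (m : ℕ) (hm : 1 ≤ m) :
    AnalyticOnNhd ℂ (fun z : ℂ => Complex.exp (-(z ^ m)⁻¹)) {(0 : ℂ)}ᶜ :=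
  DifferentiableOn.analyticOnNhd
    (fun z hz => (aux_F_diff m hm (by simpa using hz)).differentiableWithinAt)
    isOpen_compl_singleton

lemma aux_transfer (m : ℕ) (hm : 1 ≤ m) (k : ℕ) :
    ∀ x : ℝ, 0 < x →
      ((iteratedDeriv k (fun y : ℝ => Real.exp (-(y ^ m)⁻¹)) x : ℝ) : ℂ) =
        iteratedDeriv k (fun z : ℂ => Complex.exp (-(z ^ m)⁻¹)) (x : ℂ) := by
  induction k with
  | zero =>
    intro x hx
    simp only [iteratedDeriv_zero]
    push_cast [Complex.ofReal_exp]
    norm_num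
  | succ k ih =>
    intro x hx
    have hx0 : (x : ℂ) ≠ 0 := by
      simpa using hx.ne'
    have hdiff : DifferentiableAt ℂ
        (iteratedDeriv k (fun z : ℂ => Complex.exp (-(z ^ m)⁻¹))) (x : ℂ) := by
      rw [iteratedDeriv_eq_iterate]
      exact (((aux_F_analytic m hm).iterated_deriv k) (x : ℂ) hx0).differentiableAt
    set F := fun z : ℂ => Complex.exp (-(z ^ m)⁻¹) with hF
    set d := deriv (iteratedDeriv k F) (x : ℂ) with hd
    have hdF : HasDerivAt (iteratedDeriv k F) d (x : ℂ) := hdiff.hasDerivAt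
    have hcomp : HasDerivAt (fun y : ℝ => iteratedDeriv k F (y : ℂ)) d x :=
      hdF.comp_ofReal
    have heq : (fun y : ℝ => ((iteratedDeriv k (fun y : ℝ => Real.exp (-(y ^ m)⁻¹)) y : ℝ) : ℂ))
        =ᶠ[nhds x] fun y : ℝ => iteratedDeriv k F (y : ℂ) :=
      Filter.eventuallyEq_of_mem (Ioi_mem_nhds hx) fun y hy => ih y hy
    have hg : HasDerivAt
        (fun y : ℝ => ((iteratedDeriv k (fun y : ℝ => Real.exp (-(y ^ m)⁻¹)) y : ℝ) : ℂ)) d x :=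
      hcomp.congr_of_eventuallyEq heq
    have hre : HasDerivAt (fun y : ℝ => iteratedDeriv k (fun y : ℝ => Real.exp (-(y ^ m)⁻¹)) y)
        d.re x := by
      have h := (Complex.reCLM.hasFDerivAt).comp_hasDerivAt x hg
      simpa [Function.comp_def] using h
    have him : d.im = 0 := by
      have h := (Complex.imCLM.hasFDerivAt).comp_hasDerivAt x hg
      have h0 : HasDerivAt (fun _ : ℝ => (0 : ℝ)) d.im x := by simpa [Function.comp_def] using h
      exact (h0.unique (hasDerivAt_const x 0))
    rw [iteratedDeriv_succ, iteratedDeriv_succ, hre.deriv, ← hd]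
    exact Complex.ext (by simp) (by simp [him])
lemma aux_small (m : ℕ) (hm : 1 ≤ m) : ((1 : ℝ) + 1/(4*m)) ^ m ≤ 4/3 := by
  have hm0 : (0:ℝ) < m := by exact_mod_cast hm
  have h1 : (1:ℝ) + 1/(4*m) ≤ Real.exp (1/(4*m)) := by
    have := Real.add_one_le_exp (1/(4*(m:ℝ))); linarith
  have h2 : ((1:ℝ) + 1/(4*m)) ^ m ≤ Real.exp (1/(4*m)) ^ m :=
    pow_le_pow_left₀ (by positivity) h1 m
  have h3 : Real.exp (1/(4*(m:ℝ))) ^ m = Real.exp (1/4) := by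
    rw [← Real.exp_nat_mul]
    congr 1
    field_simp
  have h4 : Real.exp (1/4 : ℝ) ≤ 4/3 := by
    have h5 := Real.add_one_le_exp (-(1/4) : ℝ)
    have h6 : Real.exp (-(1/4) : ℝ) = (Real.exp (1/4))⁻¹ := Real.exp_neg _
    have h7 := Real.exp_pos (1/4 : ℝ)
    rw [h6] at h5
    have h8 : (3/4 : ℝ) ≤ (Real.exp (1/4))⁻¹ := by linarith
    calc Real.exp (1/4 : ℝ) = ((Real.exp (1/4))⁻¹)⁻¹ := by rw [inv_inv]
      _ ≤ (3/4 : ℝ)⁻¹ := by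
          exact inv_anti₀ (by norm_num) h8
      _ = 4/3 := by norm_num
  calc ((1:ℝ) + 1/(4*m)) ^ m ≤ Real.exp (1/(4*m)) ^ m := h2
    _ = Real.exp (1/4) := h3
    _ ≤ 4/3 := h4

lemma aux_ball_bound (m : ℕ) (hm : 1 ≤ m) (x : ℝ) (hx : 0 < x) (z : ℂ)
    (hz : z ∈ Metric.closedBall (x : ℂ) (x/(4*m))) :
    z ≠ 0 ∧ ‖Complex.exp (-(z ^ m)⁻¹)‖ ≤ Real.exp (-(3/8 * (x ^ m)⁻¹)) := by
  have hm0 : (0:ℝ) < m := by exact_mod_cast hm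
  have hm1 : (1:ℝ) ≤ m := by exact_mod_cast hm
  have hr : (0:ℝ) < x/(4*m) := by positivity
  have hz1 : ‖z - (x:ℂ)‖ ≤ x/(4*m) := by
    rwa [Metric.mem_closedBall, dist_eq_norm] at hz
  have hxnorm : ‖(x:ℂ)‖ = x := by
    simp [Complex.norm_real, abs_of_pos hx]
  have hzu : ‖z‖ ≤ (1 + 1/(4*m)) * x := by
    calc ‖z‖ = ‖(x:ℂ) + (z - x)‖ := by ring_nf
      _ ≤ ‖(x:ℂ)‖ + ‖z - (x:ℂ)‖ := norm_add_le _ _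
      _ ≤ x + x/(4*m) := by rw [hxnorm]; linarith
      _ = (1 + 1/(4*m)) * x := by field_simp
  have hzl : x - x/(4*m) ≤ ‖z‖ := by
    have := norm_sub_norm_le (x:ℂ) z
    have h2 : ‖(x:ℂ) - z‖ = ‖z - (x:ℂ)‖ := norm_sub_rev _ _
    rw [hxnorm] at this; rw [h2] at this; linarith
  have hzpos : (0:ℝ) < ‖z‖ := by
    have : x/(4*m) ≤ x/4 := by
      apply div_le_div_of_nonneg_left hx.le (by norm_num)
      linarith
    nlinarith
  have hzne : z ≠ 0 := by simpa using hzpos.ne'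
  refine ⟨hzne, ?_⟩
  have hsmall := aux_small m hm
  -- ‖z^m‖ ≤ (4/3) x^m
  have hMnn : (0:ℝ) ≤ (1 + 1/(4*m)) * x := by positivity
  have hzm_norm : ‖z ^ m‖ ≤ (4/3) * x ^ m := by
    rw [norm_pow]
    calc ‖z‖ ^ m ≤ ((1 + 1/(4*m)) * x) ^ m := pow_le_pow_left₀ (norm_nonneg _) hzu m
      _ = (1 + 1/(4*m)) ^ m * x ^ m := mul_pow _ _ _
      _ ≤ (4/3) * x ^ m := by nlinarith [pow_pos hx m]
  -- ‖z^m - x^m‖ ≤ (1/3) x^m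
  have hxm_le : ‖(x:ℂ)‖ ≤ (1 + 1/(4*m)) * x := by
    rw [hxnorm]; nlinarith [mul_pos (show (0:ℝ) < 1/(4*(m:ℝ)) by positivity) hx]
  have hdiffpow : ‖z ^ m - (x:ℂ) ^ m‖ ≤ (1/3) * x ^ m := by
    have h := aux_norm_pow_sub_pow z (x:ℂ) ((1 + 1/(4*m)) * x) m hMnn hzu hxm_le
    have hpred : (1 + 1/(4*(m:ℝ))) ^ (m-1) ≤ 4/3 := by
      calc (1 + 1/(4*(m:ℝ))) ^ (m-1) ≤ (1 + 1/(4*(m:ℝ))) ^ m := by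
            apply pow_le_pow_right₀ (by nlinarith) (Nat.sub_le m 1)
        _ ≤ 4/3 := hsmall
    have hxpred : x ^ (m-1) * x = x ^ m := by
      rw [← pow_succ]
      congr 1
      omega
    calc ‖z ^ m - (x:ℂ) ^ m‖ ≤ m * ((1 + 1/(4*m)) * x) ^ (m-1) * ‖z - (x:ℂ)‖ := h
      _ ≤ m * ((1 + 1/(4*m)) * x) ^ (m-1) * (x/(4*m)) := by
          apply mul_le_mul_of_nonneg_left hz1 (by positivity)
      _ = (1 + 1/(4*(m:ℝ))) ^ (m-1) * (x ^ (m-1) * x) / 4 := by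
          rw [mul_pow]
          field_simp
      _ ≤ (4/3) * x ^ m / 4 := by
          rw [hxpred]
          have := pow_pos hx m
          apply div_le_div_of_nonneg_right _ (by norm_num)
          exact mul_le_mul_of_nonneg_right hpred (pow_pos hx m).le
      _ = (1/3) * x ^ m := by ring
  -- Re(z^m) ≥ (2/3) x^m
  have hre_zm : (2/3) * x ^ m ≤ (z ^ m).re := by
    have h1 : |(z ^ m - (x:ℂ) ^ m).re| ≤ ‖z ^ m - (x:ℂ) ^ m‖ := Complex.abs_re_le_norm _
    have h2 : ((x:ℂ) ^ m).re = x ^ m := by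
      rw [← Complex.ofReal_pow, Complex.ofReal_re]
    have h3 : (z ^ m).re = x ^ m + (z ^ m - (x:ℂ) ^ m).re := by
      rw [← h2]; simp
    rw [h3]
    have := abs_le.1 h1
    linarith [hdiffpow, this.1]
  have hzm_ne : z ^ m ≠ 0 := pow_ne_zero m hzne
  -- Re((z^m)⁻¹) ≥ (3/8) x^{-m}
  have hxm : (0:ℝ) < x ^ m := pow_pos hx m
  have hnormSq : Complex.normSq (z ^ m) ≤ ((4/3) * x ^ m) ^ 2 := by
    rw [Complex.normSq_eq_norm_sq]
    exact pow_le_pow_left₀ (norm_nonneg _) hzm_norm 2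
  have hnormSq_pos : 0 < Complex.normSq (z ^ m) := Complex.normSq_pos.2 hzm_ne
  have hre_inv : (3/8) * (x ^ m)⁻¹ ≤ ((z ^ m)⁻¹).re := by
    rw [Complex.inv_re]
    calc (3/8) * (x ^ m)⁻¹ = ((2/3) * x ^ m) / ((4/3) * x ^ m) ^ 2 := by
          field_simp; ring
      _ ≤ (z ^ m).re / Complex.normSq (z ^ m) :=
          div_le_div₀ (by nlinarith [hre_zm]) hre_zm hnormSq_pos hnormSq
  -- conclude
  rw [Complex.norm_exp]
  apply Real.exp_le_exp.2
  simp only [Complex.neg_re]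
  linarith
open Metric Real Nat in
lemma aux_cauchy (m : ℕ) (hm : 1 ≤ m) (k : ℕ) (x : ℝ) (hx : 0 < x) :
    ‖iteratedDeriv k (fun z : ℂ => Complex.exp (-(z ^ m)⁻¹)) (x : ℂ)‖ ≤
      (k ! : ℝ) * (Real.exp (-(3/8 * (x ^ m)⁻¹)) * ((x/(4*m))⁻¹) ^ k) := by
  have hm0 : (0:ℝ) < m := by exact_mod_cast hm
  set F := fun z : ℂ => Complex.exp (-(z ^ m)⁻¹) with hF
  set C := Real.exp (-(3/8 * (x ^ m)⁻¹)) with hC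
  have hr : (0:ℝ) < x/(4*m) := by positivity
  set R : NNReal := ⟨x/(4*m), hr.le⟩ with hR
  have hRr : (R : ℝ) = x/(4*m) := rfl
  have hRpos : 0 < R := by
    rw [← NNReal.coe_pos, hRr]; exact hr
  have hmem : ∀ z ∈ closedBall (x : ℂ) (R : ℝ), z ≠ 0 :=
    fun z hz => (aux_ball_bound m hm x hx z (by rwa [hRr] at hz)).1
  have hcont : ContinuousOn F (closedBall (x : ℂ) (R : ℝ)) := fun z hz =>
    ((aux_F_diff m hm (hmem z hz)).continuousAt).continuousWithinAt
  have hdiff : ∀ z ∈ ball (x : ℂ) (R : ℝ) \ (∅ : Set ℂ), DifferentiableAt ℂ F z := fun z hz =>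
    aux_F_diff m hm (hmem z (ball_subset_closedBall hz.1))
  have hps : HasFPowerSeriesOnBall F (cauchyPowerSeries F (x : ℂ) R) (x : ℂ) R :=
    Complex.hasFPowerSeriesOnBall_of_differentiable_off_countable
      Set.countable_empty hcont hdiff hRpos
  have heq : iteratedDeriv k F (x : ℂ) =
      k ! • (cauchyPowerSeries F (x : ℂ) R k fun _ => (1 : ℂ)) := by
    rw [iteratedDeriv_eq_iteratedFDeriv, ← hps.factorial_smul (1 : ℂ) k]
  have hCpos : (0:ℝ) < C := Real.exp_pos _
  -- bound the integral
  have hcont2 : Continuous fun θ : ℝ => ‖F (circleMap (x : ℂ) R θ)‖ := by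
    refine Continuous.norm ?_
    refine continuous_iff_continuousAt.2 fun θ => ?_
    have hmem2 : circleMap (x : ℂ) R θ ∈ closedBall (x : ℂ) (R : ℝ) :=
      circleMap_mem_closedBall _ R.coe_nonneg θ
    exact ((aux_F_diff m hm (hmem _ hmem2)).continuousAt).comp
      (continuous_circleMap _ _).continuousAt
  have hint : (∫ θ : ℝ in (0)..2*π, ‖F (circleMap (x : ℂ) R θ)‖) ≤ 2*π*C := by
    calc (∫ θ : ℝ in (0)..2*π, ‖F (circleMap (x : ℂ) R θ)‖)
        ≤ ∫ _ : ℝ in (0)..2*π, C := by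
          apply intervalIntegral.integral_mono_on Real.two_pi_pos.le
            (hcont2.intervalIntegrable _ _) intervalIntegrable_const
          intro θ _
          exact (aux_ball_bound m hm x hx _
            (by rw [← hRr]; exact circleMap_mem_closedBall _ R.coe_nonneg θ)).2
      _ = 2*π*C := by simp [mul_comm]
  have hn1 : ‖cauchyPowerSeries F (x : ℂ) R k fun _ => (1 : ℂ)‖ ≤
      ‖cauchyPowerSeries F (x : ℂ) R k‖ := by
    have h := (cauchyPowerSeries F (x : ℂ) R k).le_opNorm (fun _ => (1 : ℂ))
    simpa using h
  have hn2 := norm_cauchyPowerSeries_le F (x : ℂ) R k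
  have hn3 : ((2 * π)⁻¹ * ∫ θ : ℝ in (0)..2 * π, ‖F (circleMap (x:ℂ) R θ)‖) * |(R:ℝ)|⁻¹ ^ k
      ≤ C * ((x/(4*m))⁻¹) ^ k := by
    have habs : |(R:ℝ)|⁻¹ ^ k = ((x/(4*m))⁻¹) ^ k := by rw [hRr, abs_of_pos hr]
    rw [habs]
    apply mul_le_mul_of_nonneg_right _ (by positivity)
    rw [inv_mul_le_iff₀ Real.two_pi_pos]
    linarith [hint]

  calc ‖iteratedDeriv k F (x : ℂ)‖
      = (k ! : ℝ) * ‖cauchyPowerSeries F (x : ℂ) R k fun _ => (1 : ℂ)‖ := by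
        rw [heq, nsmul_eq_mul, norm_mul]
        norm_num
    _ ≤ (k ! : ℝ) * (C * ((x/(4*m))⁻¹) ^ k) := by
        apply mul_le_mul_of_nonneg_left _ (by positivity)
        exact le_trans hn1 (le_trans hn2 hn3)
open Nat Real in
lemma aux_final (m k : ℕ) (hm : 1 ≤ m) (hk : k ≠ 0) (x : ℝ) (hx : 0 < x) :
    (k ! : ℝ) * (Real.exp (-(3/8 * (x ^ m)⁻¹)) * ((x/(4*m))⁻¹) ^ k) ≤
      (8 * m : ℝ) ^ k * (k : ℝ) ^ (((1 : ℝ) + 1 / m) * k) := by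
  have hm0 : (0:ℝ) < m := by exact_mod_cast hm
  have hm1 : (1:ℝ) ≤ m := by exact_mod_cast hm
  have hkpos : 0 < k := Nat.pos_of_ne_zero hk
  have hkR : (0:ℝ) < k := by exact_mod_cast hkpos
  have he : (8:ℝ)/3 ≤ Real.exp 1 := by
    have := Real.exp_one_gt_d9
    norm_num at this ⊢
    linarith
  have hepos := Real.exp_pos (1:ℝ)
  -- Step 2 : exp(-(3/8)(x^m)⁻¹) * (x⁻¹)^k ≤ 2^k * k^(k/m)
  have step2 : Real.exp (-(3/8 * (x ^ m)⁻¹)) * (x⁻¹) ^ k ≤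
      2 ^ k * (k:ℝ) ^ ((k:ℝ)/m) := by
    have hmne : m ≠ 0 := by omega
    apply le_of_pow_le_pow_left₀ hmne (by positivity)
    have hL : (Real.exp (-(3/8 * (x ^ m)⁻¹)) * (x⁻¹) ^ k) ^ m =
        ((x ^ m)⁻¹) ^ k * Real.exp (-((3*m/8) * (x ^ m)⁻¹)) := by
      rw [mul_pow, ← Real.exp_nat_mul]
      rw [← pow_mul, mul_comm k m, pow_mul, inv_pow x m]
      ring_nf
    have hR : (2 ^ k * (k:ℝ) ^ ((k:ℝ)/m)) ^ m = 2 ^ (k*m) * (k:ℝ) ^ k := by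
      rw [mul_pow, ← pow_mul]
      congr 1
      rw [← Real.rpow_natCast ((k:ℝ) ^ ((k:ℝ)/m)) m, ← Real.rpow_mul hkR.le,
        div_mul_cancel₀ _ (by exact_mod_cast hm0.ne' : (m:ℝ) ≠ 0), Real.rpow_natCast]
    rw [hL, hR]
    have hb : (0:ℝ) < 3*m/8 := by positivity
    calc ((x ^ m)⁻¹) ^ k * Real.exp (-((3*m/8) * (x ^ m)⁻¹))
        ≤ ((k:ℝ) / ((3*m/8) * Real.exp 1)) ^ k :=
          aux_pow_mul_exp_le k _ _ hb (by positivity)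
      _ ≤ (k:ℝ) ^ k := by
          apply pow_le_pow_left₀ (by positivity)
          apply div_le_self hkR.le
          nlinarith
      _ ≤ 2 ^ (k*m) * (k:ℝ) ^ k := by
          apply le_mul_of_one_le_left (by positivity)
          exact one_le_pow₀ (by norm_num : (1:ℝ) ≤ 2)
  -- RHS split
  have hsplit : (k : ℝ) ^ (((1 : ℝ) + 1 / m) * k) = (k:ℝ) ^ k * (k:ℝ) ^ ((k:ℝ)/m) := by
    rw [show ((1 : ℝ) + 1 / m) * k = (k:ℝ) + (k:ℝ)/m by ring, Real.rpow_add hkR,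
      Real.rpow_natCast]
  have step1 : (k ! : ℝ) ≤ (k:ℝ) ^ k := by exact_mod_cast Nat.factorial_le_pow k
  have hinv : ((x/(4*m))⁻¹) ^ k = (4*(m:ℝ)) ^ k * (x⁻¹) ^ k := by
    rw [← mul_pow]
    congr 1
    field_simp
  calc (k ! : ℝ) * (Real.exp (-(3/8 * (x ^ m)⁻¹)) * ((x/(4*m))⁻¹) ^ k)
      = (k ! : ℝ) * ((Real.exp (-(3/8 * (x ^ m)⁻¹)) * (x⁻¹) ^ k) * (4*(m:ℝ)) ^ k) := by
        rw [hinv]; ring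
    _ ≤ (k:ℝ) ^ k * ((2 ^ k * (k:ℝ) ^ ((k:ℝ)/m)) * (4*(m:ℝ)) ^ k) := by
        apply mul_le_mul step1 (mul_le_mul_of_nonneg_right step2 (by positivity))
          (by positivity) (by positivity)
    _ = (8 * m : ℝ) ^ k * ((k:ℝ) ^ k * (k:ℝ) ^ ((k:ℝ)/m)) := by
        rw [show (8 * (m:ℝ)) ^ k = 2 ^ k * (4*(m:ℝ)) ^ k by rw [← mul_pow]; ring_nf]
        ring
    _ = (8 * m : ℝ) ^ k * (k : ℝ) ^ (((1 : ℝ) + 1 / m) * k) := by rw [hsplit]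

/-- Let `m ≥ 1` be an integer.  For every integer `k ≥ 0` and every real
`x > 0`, the `k`-th derivative of `x ↦ exp(−x^{−m})` satisfies
`|D^k(e^{−x^{−m}})(x)| ≤ (8m)^k · k^{(1+1/m)·k}` (with the convention `0⁰ = 1`). -/
theorem iteratedDeriv_exp_neg_inv_pow_bound
    (m : ℕ) (hm : 1 ≤ m) (k : ℕ) (x : ℝ) (hx : 0 < x) :
    |iteratedDeriv k (fun y : ℝ => Real.exp (-(y ^ m)⁻¹)) x| ≤
      (8 * m : ℝ) ^ k * (k : ℝ) ^ (((1 : ℝ) + 1 / m) * k) := by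
  rcases eq_or_ne k 0 with rfl | hk
  · simp only [iteratedDeriv_zero, pow_zero, Nat.cast_zero, mul_zero, Real.rpow_zero, one_mul]
    rw [Real.abs_exp]
    apply Real.exp_le_one_iff.2
    have : (0:ℝ) < x ^ m := pow_pos hx m
    simp only [neg_nonpos]
    positivity
  · calc |iteratedDeriv k (fun y : ℝ => Real.exp (-(y ^ m)⁻¹)) x|
        = ‖iteratedDeriv k (fun z : ℂ => Complex.exp (-(z ^ m)⁻¹)) (x : ℂ)‖ := by
          rw [← aux_transfer m hm k x hx, Complex.norm_real, Real.norm_eq_abs]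
      _ ≤ (k.factorial : ℝ) * (Real.exp (-(3/8 * (x ^ m)⁻¹)) * ((x/(4*m))⁻¹) ^ k) :=
          aux_cauchy m hm k x hx
      _ ≤ (8 * m : ℝ) ^ k * (k : ℝ) ^ (((1 : ℝ) + 1 / m) * k) :=
          aux_final m k hm hk x hx
end

section
/- Let η ∈ (0, 1), A > 0, a > 0 and set B(ξ) = A · exp(−a · |ξ|^{1−η}). There exists a constant C depending only on η, A, a such that the following holds: for every δ > 0 and every sequence of measurable functions g_k : ℝ → ℂ (k ∈ ℤ_{≥0}) satisfying |g_k(ξ)| ≤ δ^{1/2} · (B(δ(ξ − ξ_k)) + B(δ(ξ + ξ_k))) for all ξ, where ξ_k = (2k+1)/(4δ), one has ∑_{k=0}^∞ ∫_{−1/2}^{1/2} |g_k(ξ)|² dξ ≤ C · δ. -/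
open MeasureTheory

open Real Nat

lemma aux_poly_bound {a p : ℝ} (ha : 0 < a) (hp : 0 < p) :
    ∃ K : ℝ, 0 < K ∧ ∀ s : ℝ, 0 ≤ s → Real.exp (-(a * s ^ p)) ≤ K / (s ^ 2 + 1) := by
  set n : ℕ := ⌈2 / p⌉₊ with hn
  have hfac : (0:ℝ) < n ! := by positivity
  refine ⟨2 * ((n ! : ℝ) / a ^ n) + 2, by positivity, fun s hs => ?_⟩
  rw [le_div_iff₀ (by positivity)]
  rcases le_or_gt s 1 with hs1 | hs1
  · have h1 : Real.exp (-(a * s ^ p)) ≤ 1 := by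
      apply Real.exp_le_one_iff.mpr
      have : (0:ℝ) ≤ a * s ^ p := by positivity
      linarith
    have hfa : (0:ℝ) ≤ (n ! : ℝ) / a ^ n := by positivity
    nlinarith [Real.exp_pos (-(a * s ^ p))]
  · have hs0 : 0 < s := lt_trans one_pos hs1
    have hsp1 : (1:ℝ) ≤ s ^ p := by
      calc (1:ℝ) = 1 ^ p := (Real.one_rpow p).symm
      _ ≤ s ^ p := Real.rpow_le_rpow zero_le_one hs1.le hp.le
    have h2pn : (2:ℝ) ≤ p * n := by
      have h1 := Nat.le_ceil (2 / p)
      rw [div_le_iff₀ hp] at h1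
      linarith [h1]
    have key : s ^ (2:ℕ) ≤ (s ^ p) ^ n := by
      have h1 : s ^ ((2:ℝ)) ≤ s ^ (p * n) :=
        Real.rpow_le_rpow_of_exponent_le hs1.le h2pn
      rw [Real.rpow_mul hs, Real.rpow_natCast, Real.rpow_two] at h1
      exact_mod_cast h1
    have hexp : (a * s ^ p) ^ n / n ! ≤ Real.exp (a * s ^ p) := by
      calc (a * s ^ p) ^ n / n !
          ≤ ∑ i ∈ Finset.range (n + 1), (a * s ^ p) ^ i / i ! := by
            exact Finset.single_le_sum (f := fun i => (a * s ^ p) ^ i / (i ! : ℝ))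
              (fun i _ => by positivity) (Finset.self_mem_range_succ n)
        _ ≤ Real.exp (a * s ^ p) := Real.sum_le_exp_of_nonneg (by positivity) _
    have htpos : (0:ℝ) < (a * s ^ p) ^ n := by positivity
    have h2 : Real.exp (-(a * s ^ p)) ≤ (n ! : ℝ) / (a * s ^ p) ^ n := by
      rw [Real.exp_neg]
      calc (Real.exp (a * s ^ p))⁻¹ ≤ ((a * s ^ p) ^ n / n !)⁻¹ := by
            apply inv_anti₀ (by positivity) hexp
        _ = (n ! : ℝ) / (a * s ^ p) ^ n := by rw [inv_div]
    have hfin : Real.exp (-(a * s ^ p)) * (s ^ 2 + 1)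
        ≤ ((n ! : ℝ) / (a * s ^ p) ^ n) * (2 * (s ^ p) ^ n) := by
      apply mul_le_mul h2 _ (by positivity) (by positivity)
      have : s ^ 2 = s ^ (2:ℕ) := by norm_num
      rw [this]
      nlinarith [key, hsp1]
    have heq : ((n ! : ℝ) / (a * s ^ p) ^ n) * (2 * (s ^ p) ^ n)
        = 2 * ((n ! : ℝ) / a ^ n) := by
      rw [mul_pow]
      have h1 : (s ^ p) ^ n ≠ 0 := by positivity
      field_simp
    rw [heq] at hfin
    linarith

lemma aux_integrable {a p : ℝ} (ha : 0 < a) (hp : 0 < p) :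
    Integrable (fun u : ℝ => Real.exp (-(a * |u| ^ p))) := by
  obtain ⟨K, hK, hbound⟩ := aux_poly_bound ha hp
  have hcont : Continuous (fun u : ℝ => Real.exp (-(a * |u| ^ p))) := by
    exact Real.continuous_exp.comp
      (continuous_const.mul ((Real.continuous_rpow_const hp.le).comp continuous_abs)).neg
  apply Integrable.mono' (integrable_inv_one_add_sq.const_mul K)
    hcont.aestronglyMeasurable
  filter_upwards with u
  rw [Real.norm_of_nonneg (Real.exp_pos _).le]
  have h1 := hbound |u| (abs_nonneg u)
  rw [sq_abs] at h1
  calc Real.exp (-(a * |u| ^ p)) ≤ K / (u ^ 2 + 1) := h1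
    _ = K * (1 + u ^ 2)⁻¹ := by rw [div_eq_mul_inv, add_comm]

lemma aux_summable {a p : ℝ} (ha : 0 < a) (hp : 0 < p) :
    Summable (fun k : ℕ => Real.exp (-(a * ((2 * (k:ℝ) + 1) / 8) ^ p))) := by
  obtain ⟨K, hK, hbound⟩ := aux_poly_bound ha hp
  have hsum : Summable (fun k : ℕ => 32 * K / ((k:ℝ) + 1) ^ 2) := by
    simp_rw [div_eq_mul_inv]
    apply Summable.mul_left
    have h1 : Summable (fun n : ℕ => 1 / ((n:ℝ)) ^ 2) :=
      summable_one_div_nat_pow.mpr one_lt_two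
    have h2 := (summable_nat_add_iff 1).mpr h1
    apply h2.congr
    intro n
    push_cast
    field_simp
  apply Summable.of_nonneg_of_le (fun k => (Real.exp_pos _).le) _ hsum
  intro k
  set s : ℝ := (2 * (k:ℝ) + 1) / 8 with hs
  have hs0 : 0 ≤ s := by positivity
  calc Real.exp (-(a * s ^ p)) ≤ K / (s ^ 2 + 1) := hbound s hs0
    _ ≤ 32 * K / ((k:ℝ) + 1) ^ 2 := by
      have hk : (0:ℝ) ≤ (k:ℝ) := Nat.cast_nonneg k
      have hineq : ((k:ℝ) + 1) ^ 2 ≤ 32 * (s ^ 2 + 1) := by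
        rw [hs]; nlinarith
      rw [div_le_div_iff₀ (by positivity) (by positivity)]
      nlinarith [mul_le_mul_of_nonneg_left hineq hK.le]

/-- Let `η ∈ (0,1)`, `A > 0`, `a > 0`, and set
`B(ξ) = A·exp(−a·|ξ|^{1−η})`.  There exists a constant `C` depending only on `η, A, a`
such that: for every `δ > 0` and every sequence of measurable functions `g_k : ℝ → ℂ`
(`k ∈ ℤ_{≥0}`) satisfying `|g_k(ξ)| ≤ δ^{1/2}·(B(δ(ξ − ξ_k)) + B(δ(ξ + ξ_k)))` for all
`ξ`, where `ξ_k = (2k+1)/(4δ)`, one has `∑_{k=0}^∞ ∫_{−1/2}^{1/2} |g_k(ξ)|² dξ ≤ C·δ`. -/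
theorem total_low_frequency_energy_bound
    (η A a : ℝ) (hη : η ∈ Set.Ioo (0:ℝ) 1) (hA : 0 < A) (ha : 0 < a)
    (B : ℝ → ℝ) (hB : ∀ ξ : ℝ, B ξ = A * Real.exp (-a * |ξ| ^ (1 - η))) :
    ∃ C : ℝ, 0 < C ∧
      ∀ (δ : ℝ), 0 < δ → ∀ g : ℕ → ℝ → ℂ,
        (∀ k : ℕ, Measurable (g k)) →
        (∀ (k : ℕ) (ξ : ℝ), ‖g k ξ‖ ≤ Real.sqrt δ *
          (B (δ * (ξ - (2 * (k : ℝ) + 1) / (4 * δ))) +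
           B (δ * (ξ + (2 * (k : ℝ) + 1) / (4 * δ))))) →
        ∑' k : ℕ, ∫ ξ in Set.Icc (-(1:ℝ)/2) (1/2), ‖g k ξ‖ ^ 2 ≤ C * δ := by
  obtain ⟨hη0, hη1⟩ := hη
  have hp : (0:ℝ) < 1 - η := by linarith
  set p : ℝ := 1 - η with hpdef
  set h : ℝ → ℝ := fun u => Real.exp (-(a * |u| ^ p)) with hhdef
  have hint : Integrable h := aux_integrable ha hp
  have hh0 : ∀ u, 0 ≤ h u := fun u => (Real.exp_pos _).le
  have hh1 : ∀ u, h u ≤ 1 := by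
    intro u
    apply Real.exp_le_one_iff.mpr
    have : (0:ℝ) ≤ a * |u| ^ p := by positivity
    linarith
  set e : ℕ → ℝ := fun k => Real.exp (-(a * ((2 * (k:ℝ) + 1) / 8) ^ p)) with hedef
  have hesum : Summable e := aux_summable ha hp
  have he0 : ∀ k, 0 ≤ e k := fun k => (Real.exp_pos _).le
  set T := ∑' k, e k with hTdef
  set J := ∫ u, h u with hJdef
  have hT0 : 0 ≤ T := tsum_nonneg he0
  have hJ0 : 0 ≤ J := integral_nonneg hh0
  have hBh : ∀ x, B x = A * h x := by
    intro x
    rw [hB x, neg_mul]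
  have hB2 : ∀ x : ℝ, B x ^ 2 ≤ A ^ 2 * h x := by
    intro x
    rw [hBh x, mul_pow]
    have h3 : h x ^ 2 ≤ h x := by nlinarith [hh0 x, hh1 x]
    exact mul_le_mul_of_nonneg_left h3 (sq_nonneg A)
  refine ⟨4 * A ^ 2 * T + 16 * A ^ 2 * J + 1, by positivity, ?_⟩
  intro δ hδ g hgm hgb
  have hδ' : δ ≠ 0 := ne_of_gt hδ
  set c : ℕ → ℝ := fun k => (2 * (k:ℝ) + 1) / 4 with hcdef
  have hc0 : ∀ k, 0 < c k := fun k => by positivity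
  have harg1 : ∀ (k : ℕ) (ξ : ℝ), δ * (ξ - (2 * (k:ℝ) + 1) / (4 * δ)) = δ * ξ - c k := by
    intro k ξ
    show δ * (ξ - (2 * (k:ℝ) + 1) / (4 * δ)) = δ * ξ - (2 * (k:ℝ) + 1) / 4
    field_simp
  have harg2 : ∀ (k : ℕ) (ξ : ℝ), δ * (ξ + (2 * (k:ℝ) + 1) / (4 * δ)) = δ * ξ + c k := by
    intro k ξ
    show δ * (ξ + (2 * (k:ℝ) + 1) / (4 * δ)) = δ * ξ + (2 * (k:ℝ) + 1) / 4
    field_simp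
  -- pointwise bound
  have hpoint : ∀ (k : ℕ) (ξ : ℝ),
      ‖g k ξ‖ ^ 2 ≤ 2 * δ * A ^ 2 * (h (δ * ξ - c k) + h (δ * ξ + c k)) := by
    intro k ξ
    have h1 := hgb k ξ
    rw [harg1 k ξ, harg2 k ξ] at h1
    have h2 : ‖g k ξ‖ ^ 2 ≤ (Real.sqrt δ * (B (δ * ξ - c k) + B (δ * ξ + c k))) ^ 2 :=
      pow_le_pow_left₀ (norm_nonneg _) h1 2
    rw [mul_pow, Real.sq_sqrt hδ.le] at h2
    have hb1 := hB2 (δ * ξ - c k)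
    have hb2 := hB2 (δ * ξ + c k)
    have hB0a : 0 ≤ B (δ * ξ - c k) := by rw [hBh]; exact mul_nonneg hA.le (hh0 _)
    have hB0b : 0 ≤ B (δ * ξ + c k) := by rw [hBh]; exact mul_nonneg hA.le (hh0 _)
    nlinarith [sq_nonneg (B (δ * ξ - c k) - B (δ * ξ + c k)), hδ.le,
      mul_le_mul_of_nonneg_left (add_le_add hb1 hb2) hδ.le]
  -- integrability facts
  have hφ1 : ∀ cc : ℝ, Integrable (fun ξ : ℝ => h (δ * ξ - cc)) := by
    intro cc
    exact (hint.comp_sub_right cc).comp_mul_left' hδ'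
  have hφ2 : ∀ cc : ℝ, Integrable (fun ξ : ℝ => h (δ * ξ + cc)) := by
    intro cc
    have := hφ1 (-cc)
    simpa [sub_neg_eq_add] using this
  have hφint : ∀ k, Integrable (fun ξ : ℝ => h (δ * ξ - c k) + h (δ * ξ + c k)) :=
    fun k => (hφ1 (c k)).add (hφ2 (c k))
  have hgiOn : ∀ k, IntegrableOn (fun ξ => ‖g k ξ‖ ^ 2) (Set.Icc (-(1:ℝ)/2) (1/2)) := by
    intro k
    have hmeas : AEStronglyMeasurable (fun ξ => ‖g k ξ‖ ^ 2) volume :=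
      ((hgm k).norm.pow_const 2).aestronglyMeasurable
    have : Integrable (fun ξ => ‖g k ξ‖ ^ 2) := by
      apply Integrable.mono' ((hφint k).const_mul (2 * δ * A ^ 2)) hmeas
      filter_upwards with ξ
      rw [Real.norm_of_nonneg (by positivity)]
      exact hpoint k ξ
    exact this.integrableOn
  -- integral of translated h over the window
  have hIh : ∀ cc : ℝ, (∫ ξ in Set.Icc (-(1:ℝ)/2) (1/2), h (δ * ξ - cc)) ≤ J / δ := by
    intro cc
    calc (∫ ξ in Set.Icc (-(1:ℝ)/2) (1/2), h (δ * ξ - cc))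
        ≤ ∫ ξ, h (δ * ξ - cc) :=
          setIntegral_le_integral (hφ1 cc) (ae_of_all _ fun ξ => hh0 _)
      _ = |δ⁻¹| • ∫ y, h (y - cc) :=
          MeasureTheory.Measure.integral_comp_mul_left (fun y => h (y - cc)) δ
      _ = J / δ := by
          rw [integral_sub_right_eq_self h cc, abs_of_pos (inv_pos.mpr hδ), smul_eq_mul,
            ← hJdef, inv_mul_eq_div]
  have hIh2 : ∀ cc : ℝ, (∫ ξ in Set.Icc (-(1:ℝ)/2) (1/2), h (δ * ξ + cc)) ≤ J / δ := by
    intro cc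
    have := hIh (-cc)
    simpa [sub_neg_eq_add] using this
  -- case A
  have hcaseA : ∀ k : ℕ, 4 * δ < 2 * (k:ℝ) + 1 →
      (∫ ξ in Set.Icc (-(1:ℝ)/2) (1/2), ‖g k ξ‖ ^ 2) ≤ 4 * δ * A ^ 2 * e k := by
    intro k hk
    have hck : c k = (2 * (k:ℝ) + 1) / 4 := rfl
    have hδc : δ < c k := by rw [hck]; linarith
    have hptk : ∀ ξ ∈ Set.Icc (-(1:ℝ)/2) (1/2), ‖g k ξ‖ ^ 2 ≤ 4 * δ * A ^ 2 * e k := by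
      intro ξ hξ
      obtain ⟨hξ1, hξ2⟩ := hξ
      have hδξ : |δ * ξ| ≤ δ / 2 := by
        rw [abs_mul, abs_of_pos hδ]
        have hξa : |ξ| ≤ 1/2 := abs_le.mpr ⟨by linarith, by linarith⟩
        nlinarith
      have hq1 : (2 * (k:ℝ) + 1) / 8 ≤ |δ * ξ - c k| := by
        have h1 : |c k| - |δ * ξ| ≤ |c k - δ * ξ| := abs_sub_abs_le_abs_sub _ _
        rw [abs_of_pos (hc0 k), abs_sub_comm] at h1
        rw [hck] at h1 hδc ⊢
        linarith
      have hq2 : (2 * (k:ℝ) + 1) / 8 ≤ |δ * ξ + c k| := by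
        have h1 : |c k| - |-(δ * ξ)| ≤ |c k - -(δ * ξ)| := abs_sub_abs_le_abs_sub _ _
        rw [abs_of_pos (hc0 k), abs_neg, sub_neg_eq_add, add_comm] at h1
        rw [hck] at h1 hδc ⊢
        linarith
      have hmono : ∀ x : ℝ, (2 * (k:ℝ) + 1) / 8 ≤ |x| → h x ≤ e k := by
        intro x hx
        apply Real.exp_le_exp.mpr
        have hr := Real.rpow_le_rpow (by positivity) hx hp.le
        nlinarith [hr, ha.le]
      calc ‖g k ξ‖ ^ 2 ≤ 2 * δ * A ^ 2 * (h (δ * ξ - c k) + h (δ * ξ + c k)) := hpoint k ξ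
        _ ≤ 2 * δ * A ^ 2 * (e k + e k) := by
            apply mul_le_mul_of_nonneg_left (add_le_add (hmono _ hq1) (hmono _ hq2))
            positivity
        _ = 4 * δ * A ^ 2 * e k := by ring
    calc (∫ ξ in Set.Icc (-(1:ℝ)/2) (1/2), ‖g k ξ‖ ^ 2)
        ≤ ∫ _ξ in Set.Icc (-(1:ℝ)/2) (1/2), 4 * δ * A ^ 2 * e k :=
          setIntegral_mono_on (hgiOn k)
            ((integrableOn_const_iff).mpr (Or.inr measure_Icc_lt_top)) measurableSet_Icc hptk
      _ = 4 * δ * A ^ 2 * e k := by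
          rw [setIntegral_const, Real.volume_real_Icc]
          norm_num
  -- case B
  have hcaseB : ∀ k : ℕ,
      (∫ ξ in Set.Icc (-(1:ℝ)/2) (1/2), ‖g k ξ‖ ^ 2) ≤ 4 * A ^ 2 * J := by
    intro k
    calc (∫ ξ in Set.Icc (-(1:ℝ)/2) (1/2), ‖g k ξ‖ ^ 2)
        ≤ ∫ ξ in Set.Icc (-(1:ℝ)/2) (1/2),
            2 * δ * A ^ 2 * (h (δ * ξ - c k) + h (δ * ξ + c k)) :=
          setIntegral_mono_on (hgiOn k)
            (((hφint k).const_mul (2 * δ * A ^ 2)).integrableOn) measurableSet_Icc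
            (fun ξ _ => hpoint k ξ)
      _ = 2 * δ * A ^ 2 * ∫ ξ in Set.Icc (-(1:ℝ)/2) (1/2),
            (h (δ * ξ - c k) + h (δ * ξ + c k)) := integral_const_mul _ _
      _ = 2 * δ * A ^ 2 * ((∫ ξ in Set.Icc (-(1:ℝ)/2) (1/2), h (δ * ξ - c k)) +
            ∫ ξ in Set.Icc (-(1:ℝ)/2) (1/2), h (δ * ξ + c k)) := by
          rw [integral_add (hφ1 (c k)).integrableOn (hφ2 (c k)).integrableOn]
      _ ≤ 2 * δ * A ^ 2 * (J / δ + J / δ) := by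
          apply mul_le_mul_of_nonneg_left (add_le_add (hIh _) (hIh2 _))
          positivity
      _ = 4 * A ^ 2 * J := by field_simp; ring
  -- assemble
  set F : ℕ → ℝ := fun k =>
    4 * δ * A ^ 2 * e k + (if 2 * (k:ℝ) + 1 ≤ 4 * δ then 4 * A ^ 2 * J else 0) with hFdef
  have hIF : ∀ k, (∫ ξ in Set.Icc (-(1:ℝ)/2) (1/2), ‖g k ξ‖ ^ 2) ≤ F k := by
    intro k
    rcases le_or_gt (2 * (k:ℝ) + 1) (4 * δ) with hk | hk
    · have hFk : F k = 4 * δ * A ^ 2 * e k + 4 * A ^ 2 * J := by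
        simp only [hFdef, if_pos hk]
      rw [hFk]
      have h1 := hcaseB k
      have h2 : 0 ≤ 4 * δ * A ^ 2 * e k := by
        have := he0 k; positivity
      linarith
    · have hFk : F k = 4 * δ * A ^ 2 * e k + 0 := by
        simp only [hFdef, if_neg (not_le.mpr hk)]
      rw [hFk]
      have h1 := hcaseA k hk
      linarith
  have hitesum : Summable (fun k : ℕ =>
      if 2 * (k:ℝ) + 1 ≤ 4 * δ then 4 * A ^ 2 * J else 0) := by
    apply summable_of_ne_finset_zero (s := Finset.range ⌈2 * δ⌉₊)
    intro k hk
    rw [Finset.mem_range, not_lt] at hk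
    rw [if_neg]
    have h1 : (2 * δ : ℝ) ≤ (k : ℝ) := le_trans (Nat.le_ceil _) (Nat.cast_le.mpr hk)
    intro hcon
    linarith
  have hFsum : Summable F := (hesum.mul_left (4 * δ * A ^ 2)).add hitesum
  have hI0 : ∀ k, 0 ≤ ∫ ξ in Set.Icc (-(1:ℝ)/2) (1/2), ‖g k ξ‖ ^ 2 :=
    fun k => integral_nonneg (fun ξ => by positivity)
  have hIsum : Summable (fun k => ∫ ξ in Set.Icc (-(1:ℝ)/2) (1/2), ‖g k ξ‖ ^ 2) :=
    Summable.of_nonneg_of_le hI0 hIF hFsum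
  have hite : (∑' k : ℕ, if 2 * (k:ℝ) + 1 ≤ 4 * δ then 4 * A ^ 2 * J else 0)
      ≤ 16 * A ^ 2 * J * δ := by
    rcases lt_or_ge (4 * δ) 1 with hs | hs
    · have hz : ∀ k : ℕ, (if 2 * (k:ℝ) + 1 ≤ 4 * δ then 4 * A ^ 2 * J else 0) = 0 := by
        intro k
        rw [if_neg]
        have : (0:ℝ) ≤ (k:ℝ) := Nat.cast_nonneg k
        intro hcon
        linarith
      rw [tsum_congr hz, tsum_zero]
      positivity
    · have hNle : ((⌈2 * δ⌉₊ : ℕ) : ℝ) ≤ 4 * δ := by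
        rcases le_or_gt (2 * δ) 1 with h1 | h1
        · have hN1 : ⌈2 * δ⌉₊ ≤ 1 := Nat.ceil_le.mpr (by exact_mod_cast h1)
          calc ((⌈2 * δ⌉₊ : ℕ) : ℝ) ≤ 1 := by exact_mod_cast hN1
            _ ≤ 4 * δ := hs
        · have h2 := Nat.ceil_lt_add_one (by positivity : (0:ℝ) ≤ 2 * δ)
          linarith
      have hzero : ∀ k ∉ Finset.range ⌈2 * δ⌉₊,
          (if 2 * (k:ℝ) + 1 ≤ 4 * δ then 4 * A ^ 2 * J else 0) = 0 := by
        intro k hk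
        rw [Finset.mem_range, not_lt] at hk
        rw [if_neg]
        have h1 : (2 * δ : ℝ) ≤ (k : ℝ) := le_trans (Nat.le_ceil _) (Nat.cast_le.mpr hk)
        intro hcon
        linarith
      rw [tsum_eq_sum hzero]
      calc (∑ k ∈ Finset.range ⌈2 * δ⌉₊,
              if 2 * (k:ℝ) + 1 ≤ 4 * δ then 4 * A ^ 2 * J else 0)
          ≤ ∑ _k ∈ Finset.range ⌈2 * δ⌉₊, 4 * A ^ 2 * J := by
            apply Finset.sum_le_sum
            intro k _
            split_ifs
            · exact le_refl _
            · positivity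
        _ = (⌈2 * δ⌉₊ : ℝ) * (4 * A ^ 2 * J) := by
            rw [Finset.sum_const, Finset.card_range, nsmul_eq_mul]
        _ ≤ 4 * δ * (4 * A ^ 2 * J) := by
            apply mul_le_mul_of_nonneg_right hNle
            positivity
        _ = 16 * A ^ 2 * J * δ := by ring
  calc (∑' k : ℕ, ∫ ξ in Set.Icc (-(1:ℝ)/2) (1/2), ‖g k ξ‖ ^ 2)
      ≤ ∑' k : ℕ, F k := Summable.tsum_le_tsum hIF hIsum hFsum
    _ = (∑' k : ℕ, 4 * δ * A ^ 2 * e k) +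
          ∑' k : ℕ, (if 2 * (k:ℝ) + 1 ≤ 4 * δ then 4 * A ^ 2 * J else 0) :=
        Summable.tsum_add (hesum.mul_left _) hitesum
    _ = 4 * δ * A ^ 2 * T +
          ∑' k : ℕ, (if 2 * (k:ℝ) + 1 ≤ 4 * δ then 4 * A ^ 2 * J else 0) := by
        rw [tsum_mul_left]
    _ ≤ 4 * δ * A ^ 2 * T + 16 * A ^ 2 * J * δ := by linarith [hite]
    _ ≤ (4 * A ^ 2 * T + 16 * A ^ 2 * J + 1) * δ := by nlinarith [hδ, hT0, hJ0]
end
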